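/- Let p ≡ 5 (mod 8), q ≡ 3 (mod 8), q' ≡ 7 (mod 8) be primes with (q/p) = (q'/p) = -1. Then the equation p·x² − q·q'·y² = −4 has a solution in integers x, y, while the equation p·x² − q·q'·y² = 4 has no integer solution. -/

import Mathlib

/-- In `ZMod r` (r prime), if `c * v² = 1` then `c` is a square. -/
private lemma aux_isSquare_of_mul_sq_eq_one {r : ℕ} [Fact (Nat.Prime r)] {c v : ZMod r}
    (h : c * v ^ 2 = 1) : IsSquare c := by
  have hv : v ≠ 0 := by rintro rfl; simp at h
  refine ⟨v⁻¹, ?_⟩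
  field_simp
  linear_combination h

/-- Factorization step: if `k(k+1) = a·b·z²` with `a ∣ k`, `b ∣ k+1`, then the
cofactors are squares. -/
private lemma aux_factor_step {a b k z : ℕ} (hmul : k * (k + 1) = a * b * z ^ 2)
    (ha : a ∣ k) (hb : b ∣ (k + 1)) (hab : a * b ≠ 0) :
    ∃ u v : ℕ, k = a * u ^ 2 ∧ k + 1 = b * v ^ 2 := by
  have hco : Nat.Coprime k (k + 1) := by simp
  obtain ⟨k₁, hk₁⟩ := ha
  obtain ⟨k₂, hk₂⟩ := hb
  have h1 : k₁ * k₂ = z ^ 2 := by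
    have h' : (a * b) * (k₁ * k₂) = (a * b) * z ^ 2 := by
      rw [← hmul]; rw [hk₂, hk₁]; ring
    exact Nat.eq_of_mul_eq_mul_left (Nat.pos_of_ne_zero hab) h'
  have hco' : Nat.Coprime k₁ k₂ :=
    Nat.Coprime.coprime_dvd_left ⟨a, by rw [hk₁]; ring⟩
      (Nat.Coprime.coprime_dvd_right ⟨b, by rw [hk₂]; ring⟩ hco)
  have hunit : IsUnit (gcd k₁ k₂) := by
    rw [Nat.isUnit_iff]
    exact hco'
  obtain ⟨u, hu⟩ := exists_eq_pow_of_mul_eq_pow hunit h1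
  have h2 : k₂ * k₁ = z ^ 2 := by rw [mul_comm]; exact h1
  obtain ⟨v, hv⟩ := exists_eq_pow_of_mul_eq_pow (by rwa [gcd_comm]) h2
  exact ⟨u, v, by rw [hk₁, hu], by rw [hk₂, hv]⟩

/-- If `m ≡ 0 mod r` and `c·w² = m+1` (in ℕ) then `c` is a square mod `r`. -/
private lemma aux_isSquare_cast {r : ℕ} [Fact (Nat.Prime r)] {c w m : ℕ}
    (hm : (m : ZMod r) = 0) (heq : c * w ^ 2 = m + 1) : IsSquare (c : ZMod r) := by
  have h := congrArg (Nat.cast : ℕ → ZMod r) heq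
  push_cast at h
  rw [hm, zero_add] at h
  exact aux_isSquare_of_mul_sq_eq_one h

/-- If `m ≡ 0 mod r` and `m = c·w² + 1` (in ℕ) then `-c` is a square mod `r`. -/
private lemma aux_isSquare_neg_cast {r : ℕ} [Fact (Nat.Prime r)] {c w m : ℕ}
    (hm : (m : ZMod r) = 0) (heq : m = c * w ^ 2 + 1) : IsSquare (-(c : ZMod r)) := by
  have h := congrArg (Nat.cast : ℕ → ZMod r) heq
  push_cast at h
  rw [hm] at h
  have h2 : (-(c : ZMod r)) * (w : ZMod r) ^ 2 = 1 := by linear_combination h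
  exact aux_isSquare_of_mul_sq_eq_one h2

set_option maxHeartbeats 1000000 in
theorem pell_like_equation_solvable_iff_minus
    (p q q' : ℕ) [Fact (Nat.Prime p)] [Fact (Nat.Prime q)] [Fact (Nat.Prime q')]
    (hp : p % 8 = 5) (hq : q % 8 = 3) (hq' : q' % 8 = 7)
    (hqp : legendreSym p q = -1) (hq'p : legendreSym p q' = -1) :
    (∃ x y : ℤ, (p : ℤ) * x ^ 2 - (q : ℤ) * q' * y ^ 2 = -4) ∧
      ∀ x y : ℤ, (p : ℤ) * x ^ 2 - (q : ℤ) * q' * y ^ 2 ≠ 4 := by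
  have pp : Nat.Prime p := Fact.out
  have qp : Nat.Prime q := Fact.out
  have q'p : Nat.Prime q' := Fact.out
  have hp5 : 5 ≤ p := by omega
  have hq3 : 3 ≤ q := by omega
  have hq'7 : 7 ≤ q' := by omega
  have hp4 : p % 4 = 1 := by omega
  have hq2 : q ≠ 2 := by omega
  have hq'2 : q' ≠ 2 := by omega
  have hpq : p ≠ q := by omega
  have hpq' : p ≠ q' := by omega
  have hqq' : q ≠ q' := by omega
  have cpq : Nat.Coprime p q := (Nat.coprime_primes pp qp).mpr hpq
  have cpq' : Nat.Coprime p q' := (Nat.coprime_primes pp q'p).mpr hpq'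
  have cqq' : Nat.Coprime q q' := (Nat.coprime_primes qp q'p).mpr hqq'
  have cpqq' : Nat.Coprime (p * q) q' := Nat.Coprime.mul cpq' cqq'
  -- Legendre-symbol facts
  have hQp : ¬ IsSquare ((q : ZMod p)) := (legendreSym.eq_neg_one_iff' p).mp hqp
  have hQ'p : ¬ IsSquare ((q' : ZMod p)) := (legendreSym.eq_neg_one_iff' p).mp hq'p
  have hPq : ¬ IsSquare ((p : ZMod q)) := by
    refine (legendreSym.eq_neg_one_iff' q).mp ?_
    rw [legendreSym.quadratic_reciprocity_one_mod_four hp4 hq2]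
    exact hqp
  have hneg1p : IsSquare (-1 : ZMod p) := ZMod.exists_sq_eq_neg_one_iff.mpr (by omega)
  have hneg1q : ¬ IsSquare (-1 : ZMod q) := fun h =>
    (ZMod.exists_sq_eq_neg_one_iff.mp h) (by omega)
  -- the key descent lemma
  have key : ∀ x : ℕ, ∀ y : ℕ, 1 < x → x ^ 2 = p * q * q' * y ^ 2 + 1 →
      ∃ u v : ℕ, q * q' * v ^ 2 = p * u ^ 2 + 1 := by
    intro x
    induction x using Nat.strong_induction_on with
    | _ x IH =>
      intro y hx hxy
      rcases Nat.even_or_odd x with hev | hodd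
      · -- x even is impossible mod 8
        exfalso
        obtain ⟨t, rfl⟩ := hev
        have h8 := congrArg (Nat.cast : ℕ → ZMod 8) hxy
        push_cast at h8
        have e1 : ((p : ZMod 8)) = 5 := by rw [← ZMod.natCast_mod, hp]; rfl
        have e2 : ((q : ZMod 8)) = 3 := by rw [← ZMod.natCast_mod, hq]; rfl
        have e3 : ((q' : ZMod 8)) = 7 := by rw [← ZMod.natCast_mod, hq']; rfl
        rw [e1, e2, e3] at h8
        have hcontra : ∀ a b : ZMod 8, ¬ ((a + a) ^ 2 = 5 * 3 * 7 * b ^ 2 + 1) := by decide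
        exact hcontra _ _ h8
      · obtain ⟨k, rfl⟩ := hodd
        -- y is even
        have hxyZ := congrArg (Nat.cast : ℕ → ℤ) hxy
        push_cast at hxyZ
        have hyeqZ : (p : ℤ) * q * q' * y ^ 2 = 4 * (k * (k + 1)) := by
          linear_combination -hxyZ
        have hyeq : p * q * q' * y ^ 2 = 4 * (k * (k + 1)) := by exact_mod_cast hyeqZ
        have hDodd : Odd (p * q * q') :=
          ((Nat.odd_iff.mpr (by omega)).mul (Nat.odd_iff.mpr (by omega))).mul
            (Nat.odd_iff.mpr (by omega))
        rcases Nat.even_or_odd y with hyev | hyodd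
        swap
        · exfalso
          have ho : Odd (p * q * q' * y ^ 2) := hDodd.mul (hyodd.pow)
          rw [hyeq] at ho
          have := Nat.odd_iff.mp ho
          omega
        obtain ⟨z, rfl⟩ := hyev
        have h4 : 4 * (p * q * q' * z ^ 2) = 4 * (k * (k + 1)) := by
          rw [← hyeq]; ring
        have hk : k * (k + 1) = p * q * q' * z ^ 2 :=
          (Nat.eq_of_mul_eq_mul_left (by norm_num) h4).symm
        have hk1 : 1 ≤ k := by omega
        -- each prime divides k or k+1
        have hdvd : ∀ r : ℕ, Nat.Prime r → r ∣ p * q * q' → r ∣ k ∨ r ∣ (k + 1) := by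
          intro r hr hrD
          exact (Nat.Prime.dvd_mul hr).mp (hrD.trans ⟨z ^ 2, hk⟩)
        have hP := hdvd p pp ⟨q * q', by ring⟩
        have hQ := hdvd q qp ⟨p * q', by ring⟩
        have hQ' := hdvd q' q'p ⟨p * q, by ring⟩
        rcases hP with hP | hP <;> rcases hQ with hQ | hQ <;> rcases hQ' with hQ' | hQ'
        · -- p,q,q' ∣ k : descent
          have ha : p * q * q' ∣ k :=
            cpqq'.mul_dvd_of_dvd_of_dvd (cpq.mul_dvd_of_dvd_of_dvd hP hQ) hQ'
          obtain ⟨u, v, h1, h2⟩ := aux_factor_step (z := z) (a := p * q * q') (b := 1)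
            (by rw [hk]; try ring) ha (one_dvd _) (by positivity)
          rw [one_mul] at h2
          have hu : 1 ≤ u := by
            rcases Nat.eq_zero_or_pos u with rfl | h
            · simp at h1; omega
            · exact h
          have hu2 : 1 ≤ u ^ 2 := Nat.one_le_pow _ _ (by omega)
          have hD2 : 105 ≤ p * q * q' :=
            le_trans (by norm_num) (Nat.mul_le_mul (Nat.mul_le_mul hp5 hq3) hq'7)
          have hkD : 2 ≤ k := by nlinarith [h1, hu2, hD2]
          have hv : 2 ≤ v := by nlinarith [h2, hkD]
          have hvv : 2 * v ≤ v * v := Nat.mul_le_mul_right v hv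
          have hvx : v < 2 * k + 1 := by nlinarith [h2, hvv]
          exact IH v hvx u hv (by rw [← h2, h1])
        · -- a = p*q, b = q' : IsSquare q' mod p, contradiction
          obtain ⟨u, v, h1, h2⟩ := aux_factor_step (z := z) (a := p * q) (b := q')
            (by rw [hk]; try ring) (cpq.mul_dvd_of_dvd_of_dvd hP hQ) hQ' (by positivity)
          exact absurd (aux_isSquare_cast (m := p * q * u ^ 2) (r := p)
            (by push_cast; try simp) (by rw [← h2, h1])) hQ'p
        · -- a = p*q', b = q : IsSquare q mod p
          obtain ⟨u, v, h1, h2⟩ := aux_factor_step (z := z) (a := p * q') (b := q)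
            (by rw [hk]; try ring) (cpq'.mul_dvd_of_dvd_of_dvd hP hQ') hQ (by positivity)
          exact absurd (aux_isSquare_cast (m := p * q' * u ^ 2) (r := p)
            (by push_cast; try simp) (by rw [← h2, h1])) hQp
        · -- a = p, b = q*q' : the good case
          obtain ⟨u, v, h1, h2⟩ := aux_factor_step (z := z) (a := p) (b := q * q')
            (by rw [hk]; try ring) hP (cqq'.mul_dvd_of_dvd_of_dvd hQ hQ') (by positivity)
          exact ⟨u, v, by rw [← h2, h1]⟩
        · -- a = q*q', b = p : IsSquare p mod q
          obtain ⟨u, v, h1, h2⟩ := aux_factor_step (z := z) (a := q * q') (b := p)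
            (by rw [hk]; try ring) (cqq'.mul_dvd_of_dvd_of_dvd hQ hQ') hP (by positivity)
          exact absurd (aux_isSquare_cast (m := q * q' * u ^ 2) (r := q)
            (by push_cast; try simp) (by rw [← h2, h1])) hPq
        · -- a = q, b = p*q' : IsSquare (-q) mod p
          obtain ⟨u, v, h1, h2⟩ := aux_factor_step (z := z) (a := q) (b := p * q')
            (by rw [hk]; try ring) hQ (cpq'.mul_dvd_of_dvd_of_dvd hP hQ') (by positivity)
          have hsq : IsSquare (-(q : ZMod p)) := aux_isSquare_neg_cast
            (m := p * q' * v ^ 2) (by push_cast; try simp) (by rw [← h2, h1])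
          have : IsSquare ((q : ZMod p)) := by
            have := hneg1p.mul hsq
            simpa using this
          exact absurd this hQp
        · -- a = q', b = p*q : IsSquare (-q') mod p
          obtain ⟨u, v, h1, h2⟩ := aux_factor_step (z := z) (a := q') (b := p * q)
            (by rw [hk]; try ring) hQ' (cpq.mul_dvd_of_dvd_of_dvd hP hQ) (by positivity)
          have hsq : IsSquare (-(q' : ZMod p)) := aux_isSquare_neg_cast
            (m := p * q * v ^ 2) (by push_cast; try simp) (by rw [← h2, h1])
          have : IsSquare ((q' : ZMod p)) := by
            have := hneg1p.mul hsq
            simpa using this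
          exact absurd this hQ'p
        · -- a = 1, b = p*q*q' : IsSquare (-1) mod q
          have hb : p * q * q' ∣ k + 1 :=
            cpqq'.mul_dvd_of_dvd_of_dvd (cpq.mul_dvd_of_dvd_of_dvd hP hQ) hQ'
          obtain ⟨u, v, h1, h2⟩ := aux_factor_step (z := z) (a := 1) (b := p * q * q')
            (by rw [hk]; try ring) (one_dvd _) hb (by positivity)
          have hsq : IsSquare (-((1 : ℕ) : ZMod q)) := aux_isSquare_neg_cast
            (m := p * q * q' * v ^ 2) (by push_cast; try simp) (by rw [← h2, h1])
          have : IsSquare (-1 : ZMod q) := by simpa using hsq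
          exact absurd this hneg1q
  constructor
  · -- existence of a solution of p x² - q q' y² = -4
    have hD0 : (0 : ℤ) < ((p * q * q' : ℕ) : ℤ) := by positivity
    have hDnsN : ¬ IsSquare (p * q * q') := by
      rintro ⟨r, hr⟩
      have hqr : q ∣ r := by
        have hdq : q ∣ r * r := ⟨p * q', by rw [← hr]; ring⟩
        exact ((Nat.Prime.dvd_mul qp).mp hdq).elim id id
      obtain ⟨s, rfl⟩ := hqr
      have h' : q * (p * q') = q * (q * (s * s)) := by
        rw [show q * (p * q') = p * q * q' from by ring, hr]; ring
      have hcancel : p * q' = q * (s * s) := Nat.eq_of_mul_eq_mul_left (by omega) h'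
      have hdq' : q ∣ p * q' := ⟨s * s, hcancel⟩
      rcases (Nat.Prime.dvd_mul qp).mp hdq' with h | h
      · exact hpq ((Nat.prime_dvd_prime_iff_eq qp pp).mp h).symm
      · exact hqq' ((Nat.prime_dvd_prime_iff_eq qp q'p).mp h)
    have hDns : ¬ IsSquare ((p * q * q' : ℕ) : ℤ) := by
      rintro ⟨r, hr⟩
      refine hDnsN ⟨r.natAbs, ?_⟩
      have := congrArg Int.natAbs hr
      simpa [Int.natAbs_mul] using this
    obtain ⟨X, Y, hXY, hY⟩ := Pell.exists_of_not_isSquare hD0 hDns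
    have hy1 : 1 ≤ Y.natAbs := by
      rcases Nat.eq_zero_or_pos Y.natAbs with h | h
      · exact absurd (Int.natAbs_eq_zero.mp h) hY
      · exact h
    have hXYnat : (X.natAbs) ^ 2 = p * q * q' * (Y.natAbs) ^ 2 + 1 := by
      have hZ : ((X.natAbs : ℤ)) ^ 2 = ((p * q * q' : ℕ) : ℤ) * ((Y.natAbs : ℤ)) ^ 2 + 1 := by
        rw [Int.natAbs_sq, Int.natAbs_sq]
        linarith [hXY]
      exact_mod_cast hZ
    have hD105 : 105 ≤ p * q * q' :=
      le_trans (by norm_num) (Nat.mul_le_mul (Nat.mul_le_mul hp5 hq3) hq'7)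
    have hy2 : 1 ≤ Y.natAbs ^ 2 := Nat.one_le_pow _ _ (by omega)
    have h1X : 1 < X.natAbs := by
      by_contra h
      push_neg at h
      have h2' : X.natAbs ^ 2 ≤ 1 ^ 2 := Nat.pow_le_pow_left h 2
      have h3' : 105 * 1 ≤ p * q * q' * Y.natAbs ^ 2 := Nat.mul_le_mul hD105 hy2
      omega
    obtain ⟨u, v, huv⟩ := key X.natAbs Y.natAbs h1X hXYnat
    refine ⟨2 * u, 2 * v, ?_⟩
    have hZ : (q : ℤ) * q' * v ^ 2 = p * u ^ 2 + 1 := by exact_mod_cast congrArg (Nat.cast : ℕ → ℤ) huv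
    linear_combination (-4 : ℤ) * hZ
  · -- no solution of p x² - q q' y² = 4
    intro x y hxy
    have hcast := congrArg (Int.cast : ℤ → ZMod q) hxy
    push_cast at hcast
    rw [ZMod.natCast_self] at hcast
    have hPx : (p : ZMod q) * (x : ZMod q) ^ 2 = 4 := by linear_combination hcast
    have h40 : (4 : ZMod q) ≠ 0 := by
      intro h
      have h4' : ((4 : ℕ) : ZMod q) = 0 := by exact_mod_cast h
      have hdvd := (ZMod.natCast_eq_zero_iff 4 q).mp h4'
      have hle := Nat.le_of_dvd (by norm_num) hdvd
      have hq3' : q = 3 := by omega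
      rw [hq3'] at hdvd
      norm_num at hdvd
    have hx0 : ((x : ZMod q)) ≠ 0 := by
      intro h
      rw [h] at hPx
      simp at hPx
      exact h40 hPx.symm
    refine hPq ⟨2 * (x : ZMod q)⁻¹, ?_⟩
    field_simp
    linear_combination hPx
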